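/- Composition of polynomial functors admits a coclosure: for polynomials p, q define ⟨p|q⟩ := Σ_{i∈p(1)} y^{q(p[i])}. Then there is a natural bijection between morphisms p → p' ◁ q and morphisms ⟨p|q⟩ → p' of polynomial functors. -/

import Mathlib

universe u

/-- Morphisms of polynomial functors in combinatorial form. -/
def PHom (p q : PFunctor.{u, u}) : Type u :=
  Σ f : p.A → q.A, ∀ i : p.A, q.B (f i) → p.B i

/-- Composition of morphisms of polynomial functors. -/
def PHom.comp {p q r : PFunctor.{u, u}} (φ : PHom p q) (ψ : PHom q r) : PHom p r :=
  ⟨fun i => ψ.1 (φ.1 i), fun i d => φ.2 i (ψ.2 (φ.1 i) d)⟩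

/-- The identity morphism. -/
def PHom.id (p : PFunctor.{u, u}) : PHom p p := ⟨fun i => i, fun _ d => d⟩

/-- The composition product (`◁`) of two morphisms. -/
def compHom {p p' q q' : PFunctor.{u, u}} (f : PHom p p') (g : PHom q q') :
    PHom (p.comp q) (p'.comp q') :=
  ⟨fun aj => ⟨f.1 aj.1, fun d' => g.1 (aj.2 (f.2 aj.1 d'))⟩,
   fun aj uv => ⟨f.2 aj.1 uv.1, g.2 (aj.2 (f.2 aj.1 uv.1)) uv.2⟩⟩

/-- The coclosure `⟨p|q⟩ := Σ_{i ∈ p(1)} y^{q(p[i])}`. -/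
def coclos (p q : PFunctor.{u, u}) : PFunctor.{u, u} :=
  ⟨p.A, fun i => q.Obj (p.B i)⟩

theorem comp_coclosure :
    ∃ e : ∀ p q p' : PFunctor.{u, u}, PHom p (p'.comp q) ≃ PHom (coclos p q) p',
      ∀ (p q p' p'' : PFunctor.{u, u}) (φ : PHom p (p'.comp q)) (g : PHom p' p''),
        e p q p'' (PHom.comp φ (compHom g (PHom.id q))) =
          PHom.comp (e p q p' φ) g := by
  refine ⟨fun p q p' =>
    { toFun := fun φ => ⟨fun i => (φ.1 i).1,
        fun i b' => ⟨(φ.1 i).2 b', fun d => φ.2 i ⟨b', d⟩⟩⟩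
      invFun := fun ψ => ⟨fun i => ⟨ψ.1 i, fun b' => (ψ.2 i b').1⟩,
        fun i bd => (ψ.2 i bd.1).2 bd.2⟩
      left_inv := fun φ => rfl
      right_inv := fun ψ => rfl }, fun p q p' p'' φ g => rfl⟩
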